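/- There exists θ₂ ∈ (0,π/2), depending only on α, such that for all 0 < θ ≤ θ₂, all p ∈ ℍ¹ \ {0}, and all z ∈ ℝ with |z − z_p| ≤ |z_p|, the four points (0,0,z), (2x_p, 2y_p, z), (x_p − y_p tan θ, y_p + x_p tan θ, z), and (x_p + y_p tan θ, y_p − x_p tan θ, z) all belong to the closed ball B(p, r_p) in (ℍ¹, d_α), where r_p = d_α(0,p). Consequently the Euclidean convex hull Q(z, π(p), θ) of these four points is contained in B(p, r_p). -/

import Mathlib

open Real

abbrev H : Type := ℝ × ℝ × ℝ

noncomputable section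

/-- Heisenberg group law on ℝ³. -/
def hmul (p q : H) : H :=
  (p.1 + q.1, p.2.1 + q.2.1, p.2.2 + q.2.2 + (p.1 * q.2.1 - p.2.1 * q.1) / 2)

/-- Heisenberg inverse. -/
def hinv (p : H) : H := (-p.1, -p.2.1, -p.2.2)

/-- Heisenberg dilation. -/
def hdil (l : ℝ) (p : H) : H := (l * p.1, l * p.2.1, l ^ 2 * p.2.2)

/-- Horizontal norm ρ. -/
def rho (p : H) : ℝ := Real.sqrt (p.1 ^ 2 + p.2.1 ^ 2)

/-- The homogeneous distance d_α whose unit ball at the origin is the Euclidean ball of radius α. -/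
def dA (α : ℝ) (p q : H) : ℝ :=
  Real.sqrt (((rho (hmul (hinv p) q)) ^ 2 +
      Real.sqrt ((rho (hmul (hinv p) q)) ^ 4 + 4 * α ^ 2 * (hmul (hinv p) q).2.2 ^ 2)) /
    (2 * α ^ 2))

lemma dA_le_iff (α : ℝ) (hα : 0 < α) {r : ℝ} (hr : 0 < r) (p q : H) :
    dA α p q ≤ r ↔ ((hmul (hinv p) q).1 ^ 2 + (hmul (hinv p) q).2.1 ^ 2) * r ^ 2 +
      (hmul (hinv p) q).2.2 ^ 2 ≤ α ^ 2 * r ^ 4 := by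
  set m := hmul (hinv p) q with hm
  have hρnn : (0:ℝ) ≤ m.1 ^ 2 + m.2.1 ^ 2 := by positivity
  have hρ2 : rho m ^ 2 = m.1 ^ 2 + m.2.1 ^ 2 := Real.sq_sqrt hρnn
  have hρ4 : rho m ^ 4 = (m.1 ^ 2 + m.2.1 ^ 2) ^ 2 := by
    rw [show (4:ℕ) = 2*2 from rfl, pow_mul, hρ2]
  have h2α : (0:ℝ) < 2 * α ^ 2 := by positivity
  rw [dA, Real.sqrt_le_left hr.le, div_le_iff₀ h2α, hρ2, hρ4]
  set A := m.1 ^ 2 + m.2.1 ^ 2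
  set c := m.2.2
  constructor
  · intro h
    have hs : Real.sqrt (A ^ 2 + 4 * α ^ 2 * c ^ 2) ≤ 2 * α ^ 2 * r ^ 2 - A := by linarith
    have hsq : A ^ 2 + 4 * α ^ 2 * c ^ 2 ≤ (2 * α ^ 2 * r ^ 2 - A) ^ 2 := by
      have h0 : 0 ≤ 2 * α ^ 2 * r ^ 2 - A := le_trans (Real.sqrt_nonneg _) hs
      calc A ^ 2 + 4 * α ^ 2 * c ^ 2 = Real.sqrt (A ^ 2 + 4 * α ^ 2 * c ^ 2) ^ 2 := by
            rw [Real.sq_sqrt (by positivity)]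
        _ ≤ _ := by nlinarith [Real.sqrt_nonneg (A ^ 2 + 4 * α ^ 2 * c ^ 2)]
    nlinarith [sq_nonneg α, sq_nonneg r, hα]
  · intro h
    have hA : A ≤ α ^ 2 * r ^ 2 := by
      nlinarith [sq_nonneg c, mul_pos hr hr, sq_nonneg (A - α ^ 2 * r ^ 2)]
    have h0 : 0 ≤ 2 * α ^ 2 * r ^ 2 - A := by nlinarith [sq_nonneg r]
    have hs : Real.sqrt (A ^ 2 + 4 * α ^ 2 * c ^ 2) ≤ 2 * α ^ 2 * r ^ 2 - A := by
      rw [show Real.sqrt (A ^ 2 + 4 * α ^ 2 * c ^ 2) ≤ 2 * α ^ 2 * r ^ 2 - A ↔ _ from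
        Real.sqrt_le_left h0]
      nlinarith
    linarith

lemma dA_mem_iff (α : ℝ) (hα : 0 < α) {r : ℝ} (hr : 0 < r) (p q : H) :
    dA α p q ≤ r ↔ ((q.1 - p.1) ^ 2 + (q.2.1 - p.2.1) ^ 2) * r ^ 2 +
      (q.2.2 - p.2.2 + (p.2.1 * q.1 - p.1 * q.2.1) / 2) ^ 2 ≤ α ^ 2 * r ^ 4 := by
  rw [dA_le_iff α hα hr]
  have h1 : (hmul (hinv p) q).1 = q.1 - p.1 := by simp [hmul, hinv]; ring
  have h2 : (hmul (hinv p) q).2.1 = q.2.1 - p.2.1 := by simp [hmul, hinv]; ring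
  have h3 : (hmul (hinv p) q).2.2 = q.2.2 - p.2.2 + (p.2.1 * q.1 - p.1 * q.2.1) / 2 := by
    simp [hmul, hinv]; ring
  rw [h1, h2, h3]

lemma dA_zero (α : ℝ) (hα : 0 < α) (p : H) (hp : p ≠ 0) :
    0 < dA α 0 p ∧ (p.1 ^ 2 + p.2.1 ^ 2) * (dA α 0 p) ^ 2 + p.2.2 ^ 2 =
      α ^ 2 * (dA α 0 p) ^ 4 := by
  have hm : hmul (hinv 0) p = p := by
    simp [hmul, hinv]
  set A := p.1 ^ 2 + p.2.1 ^ 2 with hA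
  set c := p.2.2 with hc
  have hAnn : (0:ℝ) ≤ A := by positivity
  have hρ2 : rho p ^ 2 = A := Real.sq_sqrt hAnn
  have hρ4 : rho p ^ 4 = A ^ 2 := by rw [show (4:ℕ) = 2*2 from rfl, pow_mul, hρ2]
  set S := Real.sqrt (A ^ 2 + 4 * α ^ 2 * c ^ 2) with hSdef
  have hSnn : 0 ≤ S := Real.sqrt_nonneg _
  have hS2 : S ^ 2 = A ^ 2 + 4 * α ^ 2 * c ^ 2 := Real.sq_sqrt (by positivity)
  have h2α : (0:ℝ) < 2 * α ^ 2 := by positivity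
  have hrdef : dA α 0 p = Real.sqrt ((A + S) / (2 * α ^ 2)) := by
    rw [dA, hm, hρ2, hρ4]
  have hX : 0 < A + S := by
    rcases eq_or_lt_of_le hAnn with hA0 | hA0
    · have hc0 : c ≠ 0 := by
        intro h
        apply hp
        have h1 : p.1 = 0 := by nlinarith [sq_nonneg p.1, sq_nonneg p.2.1]
        have h2 : p.2.1 = 0 := by nlinarith [sq_nonneg p.1, sq_nonneg p.2.1]
        exact Prod.ext h1 (Prod.ext h2 h)
      have hc2 : 0 < c ^ 2 := by positivity
      have : 0 < S := Real.sqrt_pos.mpr (by nlinarith [mul_pos (pow_pos hα 2) hc2, sq_nonneg A])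
      linarith
    · linarith
  have hr0 : 0 < dA α 0 p := by
    rw [hrdef]
    exact Real.sqrt_pos.mpr (by positivity)
  set r := dA α 0 p with hr
  have hr2 : r ^ 2 = (A + S) / (2 * α ^ 2) := by
    rw [show dA α 0 p ^ 2 = r ^ 2 from rfl, hrdef, Real.sq_sqrt (by positivity)]
  have hS : S = 2 * α ^ 2 * r ^ 2 - A := by
    rw [hr2]; field_simp; ring
  refine ⟨hr0, ?_⟩
  have key : 4 * α ^ 2 * (A * r ^ 2 + c ^ 2) = 4 * α ^ 2 * (α ^ 2 * r ^ 4) := by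
    have h2 : (2 * α ^ 2 * r ^ 2 - A) ^ 2 = A ^ 2 + 4 * α ^ 2 * c ^ 2 := by rw [← hS, hS2]
    nlinarith [h2]
  exact mul_left_cancel₀ (by positivity) key

/-- Algebraic core for the rotated points. -/
lemma alg2 (α r u zp w t : ℝ) (hα : 0 < α) (hα2 : α ≤ 2) (hr : 0 < r) (hu : 0 ≤ u)
    (hE : u * r ^ 2 + zp ^ 2 = α ^ 2 * r ^ 4) (hw : |w| ≤ |zp|)
    (ht0 : 0 < t) (ht4 : t ≤ 1 / 4) (s : ℝ) (hs : s = 1 ∨ s = -1) :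
    t ^ 2 * u * r ^ 2 + (w + s * (t * u / 2)) ^ 2 ≤ α ^ 2 * r ^ 4 := by
  set B := |zp| with hB
  have hB0 : 0 ≤ B := abs_nonneg _
  have hB2 : B ^ 2 = zp ^ 2 := sq_abs zp
  have hr2 : 0 < r ^ 2 := by positivity
  have huB : u ≤ α ^ 2 * r ^ 2 := by
    have h1 : u * r ^ 2 ≤ (α ^ 2 * r ^ 2) * r ^ 2 := by nlinarith [sq_nonneg zp]
    exact le_of_mul_le_mul_right h1 hr2
  have h4α : (0:ℝ) ≤ 4 - α ^ 2 := by nlinarith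
  have hu4 : u ≤ 4 * r ^ 2 := by nlinarith [mul_nonneg h4α hr2.le]
  have hBle : B ≤ 2 * r ^ 2 := by
    have h1 : B ^ 2 ≤ (2 * r ^ 2) ^ 2 := by
      nlinarith [mul_nonneg hu hr2.le, mul_nonneg h4α (pow_nonneg hr.le 4)]
    nlinarith
  have habs : |w + s * (t * u / 2)| ≤ B + t * u / 2 := by
    rcases hs with rfl | rfl
    · calc |w + 1 * (t * u / 2)| ≤ |w| + |1 * (t * u / 2)| := abs_add_le _ _
        _ ≤ B + t * u / 2 := by
          rw [abs_of_nonneg (by positivity : (0:ℝ) ≤ 1 * (t * u / 2))]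
          simp [hB]; linarith [hw]
    · calc |w + (-1) * (t * u / 2)| ≤ |w| + |(-1) * (t * u / 2)| := abs_add_le _ _
        _ ≤ B + t * u / 2 := by
          rw [show ((-1):ℝ) * (t * u / 2) = -(t * u / 2) by ring, abs_neg,
            abs_of_nonneg (by positivity : (0:ℝ) ≤ t * u / 2)]
          linarith [hw]
  have hsq : (w + s * (t * u / 2)) ^ 2 ≤ (B + t * u / 2) ^ 2 := by
    have h1 := abs_le.mp habs
    nlinarith [h1.1, h1.2]
  have hstep : t ^ 2 * r ^ 2 + t * B + t ^ 2 * u / 4 ≤ r ^ 2 := by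
    have ht2 : t ^ 2 ≤ 1 / 16 := by nlinarith
    nlinarith [mul_le_mul_of_nonneg_right ht2 hr2.le, mul_le_mul_of_nonneg_left hBle ht0.le,
      mul_le_mul_of_nonneg_right ht2 hu, mul_le_mul_of_nonneg_left hu4 (sq_nonneg t)]
  have hmulu := mul_le_mul_of_nonneg_left hstep hu
  linarith [hsq, hmulu, hE, hB2]

lemma sq_combo (a s u : ℝ) (ha : 0 ≤ a) (hb : 0 ≤ 1 - a) :
    (a * s + (1 - a) * u) ^ 2 ≤ a * s ^ 2 + (1 - a) * u ^ 2 := by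
  nlinarith [mul_nonneg (mul_nonneg ha hb) (sq_nonneg (s - u))]

set_option maxHeartbeats 1000000 in
lemma convexS (x y zp r M : ℝ) :
    Convex ℝ {q : H | ((q.1 - x) ^ 2 + (q.2.1 - y) ^ 2) * r ^ 2 +
      (q.2.2 - zp + (y * q.1 - x * q.2.1) / 2) ^ 2 ≤ M} := by
  rintro ⟨a1, a2, a3⟩ hq1 ⟨b1, b2, b3⟩ hq2 a b ha hb hab
  obtain rfl : b = 1 - a := by linarith
  have hb' : 0 ≤ 1 - a := hb
  simp only [Set.mem_setOf_eq] at hq1 hq2 ⊢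
  show ((a * a1 + (1 - a) * b1 - x) ^ 2 + (a * a2 + (1 - a) * b2 - y) ^ 2) * r ^ 2 +
      (a * a3 + (1 - a) * b3 - zp +
        (y * (a * a1 + (1 - a) * b1) - x * (a * a2 + (1 - a) * b2)) / 2) ^ 2 ≤ M
  have c1 : a * a1 + (1 - a) * b1 - x = a * (a1 - x) + (1 - a) * (b1 - x) := by ring
  have c2 : a * a2 + (1 - a) * b2 - y = a * (a2 - y) + (1 - a) * (b2 - y) := by ring
  have c3 : a * a3 + (1 - a) * b3 - zp +
      (y * (a * a1 + (1 - a) * b1) - x * (a * a2 + (1 - a) * b2)) / 2 =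
      a * (a3 - zp + (y * a1 - x * a2) / 2) + (1 - a) * (b3 - zp + (y * b1 - x * b2) / 2) := by
    ring
  rw [c1, c2, c3]
  have j1 := sq_combo a (a1 - x) (b1 - x) ha hb'
  have j2 := sq_combo a (a2 - y) (b2 - y) ha hb'
  have j3 := sq_combo a (a3 - zp + (y * a1 - x * a2) / 2) (b3 - zp + (y * b1 - x * b2) / 2) ha hb'
  have k1 := mul_le_mul_of_nonneg_right j1 (sq_nonneg r)
  have k2 := mul_le_mul_of_nonneg_right j2 (sq_nonneg r)
  have l1 := mul_le_mul_of_nonneg_left hq1 ha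
  have l2 := mul_le_mul_of_nonneg_left hq2 hb'
  nlinarith [k1, k2, j3, l1, l2]


set_option maxHeartbeats 1000000 in
theorem stmt10 (α : ℝ) (hα : 0 < α) (hα2 : α ≤ 2) :
    ∃ θ₂ : ℝ, 0 < θ₂ ∧ θ₂ < π / 2 ∧
      ∀ θ : ℝ, 0 < θ → θ ≤ θ₂ → ∀ p : H, p ≠ 0 → ∀ z : ℝ, |z - p.2.2| ≤ |p.2.2| →
        dA α p ((0, 0, z) : H) ≤ dA α 0 p ∧
        dA α p ((2 * p.1, 2 * p.2.1, z) : H) ≤ dA α 0 p ∧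
        dA α p ((p.1 - p.2.1 * Real.tan θ, p.2.1 + p.1 * Real.tan θ, z) : H) ≤ dA α 0 p ∧
        dA α p ((p.1 + p.2.1 * Real.tan θ, p.2.1 - p.1 * Real.tan θ, z) : H) ≤ dA α 0 p ∧
        convexHull ℝ ({((0 : ℝ), (0 : ℝ), z), (2 * p.1, 2 * p.2.1, z),
            (p.1 - p.2.1 * Real.tan θ, p.2.1 + p.1 * Real.tan θ, z),
            (p.1 + p.2.1 * Real.tan θ, p.2.1 - p.1 * Real.tan θ, z)} : Set H) ⊆
          {q : H | dA α p q ≤ dA α 0 p} := by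
  have harc : 0 < Real.arctan (1/4) := by
    rw [show (0:ℝ) = Real.arctan 0 by rw [Real.arctan_zero]]
    exact Real.arctan_strictMono (by norm_num)
  refine ⟨Real.arctan (1/4), harc,
    Real.arctan_lt_pi_div_two _, ?_⟩
  intro θ hθ0 hθ2 p hp z hz
  obtain ⟨hr0, hE⟩ := dA_zero α hα p hp
  set r := dA α 0 p with hrdef
  set x := p.1 with hx
  set y := p.2.1 with hy
  set zp := p.2.2 with hzp
  set t := Real.tan θ with htdef
  have hθlt : θ < π / 2 := lt_of_le_of_lt hθ2 (Real.arctan_lt_pi_div_two _)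
  have ht0 : 0 < t := Real.tan_pos_of_pos_of_lt_pi_div_two hθ0 hθlt
  have ht4 : t ≤ 1 / 4 := by
    have hmem1 : θ ∈ Set.Ioo (-(π/2)) (π/2) := ⟨by linarith [Real.pi_pos], hθlt⟩
    have hmem2 : Real.arctan (1/4) ∈ Set.Ioo (-(π/2)) (π/2) :=
      ⟨Real.neg_pi_div_two_lt_arctan _, Real.arctan_lt_pi_div_two _⟩
    have := Real.strictMonoOn_tan.monotoneOn hmem1 hmem2 hθ2
    rwa [Real.tan_arctan] at this
  have hu : (0:ℝ) ≤ x ^ 2 + y ^ 2 := by positivity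
  -- membership conditions
  have h1 : dA α p ((0, 0, z) : H) ≤ r := by
    rw [dA_mem_iff α hα hr0]
    have hsq : (z - zp) ^ 2 ≤ zp ^ 2 := by
      have h := abs_le.mp hz
      nlinarith [h.1, h.2, sq_abs zp]
    nlinarith [hsq]
  have h2 : dA α p ((2 * x, 2 * y, z) : H) ≤ r := by
    rw [dA_mem_iff α hα hr0]
    have hsq : (z - zp) ^ 2 ≤ zp ^ 2 := by
      have h := abs_le.mp hz
      nlinarith [h.1, h.2, sq_abs zp]
    have : ((2*x - x) ^ 2 + (2*y - y) ^ 2) * r ^ 2 +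
        (z - zp + (y * (2*x) - x * (2*y)) / 2) ^ 2 = (x^2+y^2) * r^2 + (z - zp)^2 := by ring
    rw [this]
    nlinarith [hsq]
  have h3 : dA α p ((x - y * t, y + x * t, z) : H) ≤ r := by
    rw [dA_mem_iff α hα hr0]
    have key := alg2 α r (x^2+y^2) zp (z - zp) t hα hα2 hr0 hu hE hz ht0 ht4 (-1) (Or.inr rfl)
    calc ((x - y*t - x) ^ 2 + (y + x*t - y) ^ 2) * r ^ 2 +
        (z - zp + (y * (x - y*t) - x * (y + x*t)) / 2) ^ 2
        = t ^ 2 * (x^2+y^2) * r ^ 2 + ((z - zp) + (-1) * (t * (x^2+y^2) / 2)) ^ 2 := by ring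
      _ ≤ α ^ 2 * r ^ 4 := key
  have h4 : dA α p ((x + y * t, y - x * t, z) : H) ≤ r := by
    rw [dA_mem_iff α hα hr0]
    have key := alg2 α r (x^2+y^2) zp (z - zp) t hα hα2 hr0 hu hE hz ht0 ht4 1 (Or.inl rfl)
    calc ((x + y*t - x) ^ 2 + (y - x*t - y) ^ 2) * r ^ 2 +
        (z - zp + (y * (x + y*t) - x * (y - x*t)) / 2) ^ 2
        = t ^ 2 * (x^2+y^2) * r ^ 2 + ((z - zp) + 1 * (t * (x^2+y^2) / 2)) ^ 2 := by ring
      _ ≤ α ^ 2 * r ^ 4 := key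
  refine ⟨h1, h2, h3, h4, ?_⟩
  -- the convex set
  set S : Set H := {q : H | ((q.1 - x) ^ 2 + (q.2.1 - y) ^ 2) * r ^ 2 +
      (q.2.2 - zp + (y * q.1 - x * q.2.1) / 2) ^ 2 ≤ α ^ 2 * r ^ 4} with hSdef
  have hST : S ⊆ {q : H | dA α p q ≤ r} := by
    intro q hq
    rw [Set.mem_setOf_eq, dA_mem_iff α hα hr0]
    exact hq
  have hconv : Convex ℝ S := convexS x y zp r (α ^ 2 * r ^ 4)
  refine (convexHull_min ?_ hconv).trans hST
  intro q hq
  simp only [Set.mem_insert_iff, Set.mem_singleton_iff] at hq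
  have mem_of_dA : ∀ w : H, dA α p w ≤ r → w ∈ S := by
    intro w hw
    rw [hSdef, Set.mem_setOf_eq]
    exact (dA_mem_iff α hα hr0 p w).mp hw
  rcases hq with rfl | rfl | rfl | rfl
  · exact mem_of_dA _ h1
  · exact mem_of_dA _ h2
  · exact mem_of_dA _ h3
  · exact mem_of_dA _ h4
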